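/- For h > 0 and z a standard Gaussian random variable, the function ψ(h) = E[log(2·cosh(z·√h + h))] has first derivative ψ'(h) = (1/2)·(1 + E[tanh(z·√h + h)]), which is strictly positive. -/

import Mathlib

open MeasureTheory ProbabilityTheory Real Set

/-- The pressure of the one-body system on the Nishimori line:
`ψ(h) = E_z[log(2 cosh(z√h + h))]` with `z ~ N(0,1)`. -/
noncomputable def psiNL (h : ℝ) : ℝ :=
  ∫ z, Real.log (2 * Real.cosh (z * Real.sqrt h + h)) ∂(gaussianReal 0 1)

namespace PsiNL

lemma integral_gaussianReal_eq (m : ℝ) {v : NNReal} (hv2 : v ≠ 0) (f : ℝ → ℝ) :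
    ∫ x, f x ∂(gaussianReal m v) = ∫ x, gaussianPDFReal m v x * f x := by
  rw [gaussianReal_of_var_ne_zero m hv2, gaussianPDF_def]
  rw [show (fun x => ENNReal.ofReal (gaussianPDFReal m v x))
      = fun x => ((fun x => (gaussianPDFReal m v x).toNNReal) x : ENNReal) from rfl,
    integral_withDensity_eq_integral_smul ((measurable_gaussianPDFReal m v).real_toNNReal) f]
  refine integral_congr_ae (.of_forall fun x => ?_)
  simp [NNReal.smul_def, Real.coe_toNNReal _ (gaussianPDFReal_nonneg m v x)]

lemma integrable_gaussianReal_iff (m : ℝ) {v : NNReal} (hv : v ≠ 0) (f : ℝ → ℝ) :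
    Integrable f (gaussianReal m v) ↔ Integrable (fun x => gaussianPDFReal m v x * f x) := by
  rw [gaussianReal_of_var_ne_zero m hv, gaussianPDF_def,
    show (fun x => ENNReal.ofReal (gaussianPDFReal m v x))
      = fun x => ((fun x => (gaussianPDFReal m v x).toNNReal) x : ENNReal) from rfl,
    integrable_withDensity_iff_integrable_smul ((measurable_gaussianPDFReal m v).real_toNNReal)]
  constructor <;> intro hI <;> refine hI.congr (.of_forall fun x => ?_) <;>
    simp [NNReal.smul_def, Real.coe_toNNReal _ (gaussianPDFReal_nonneg m v x)]


lemma integrable_pdf_mul_id (m : ℝ) {v : NNReal} (hv : v ≠ 0) :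
    Integrable (fun x : ℝ => gaussianPDFReal m v x * x) := by
  have hvpos : (0:ℝ) < (v:ℝ) := by exact_mod_cast hv.bot_lt
  have hb : (0:ℝ) < (2 * (v:ℝ))⁻¹ := by positivity
  have h1 : Integrable (fun x : ℝ => gaussianPDFReal 0 v x * x) := by
    have := (integrable_mul_exp_neg_mul_sq hb).const_mul ((Real.sqrt (2 * π * v))⁻¹)
    refine this.congr (.of_forall fun x => ?_)
    simp only [gaussianPDFReal_def]
    have hx : -(x - 0) ^ 2 / (2 * (v:ℝ)) = -(2 * (v:ℝ))⁻¹ * x ^ 2 := by field_simp; ring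
    rw [hx]; ring
  have h2 : Integrable (fun x : ℝ => gaussianPDFReal 0 v x * (x + m)) := by
    have h3 := (integrable_gaussianPDFReal 0 v).mul_const m
    refine (h1.add h3).congr (.of_forall fun x => ?_); simp; ring
  have h4 := h2.comp_sub_right m
  refine h4.congr (.of_forall fun x => ?_)
  simp only [gaussianPDFReal_sub, zero_add, sub_add_cancel]

lemma even_pdf {v : NNReal} (x : ℝ) : gaussianPDFReal 0 v (-x) = gaussianPDFReal 0 v x := by
  simp [gaussianPDFReal]

lemma integral_pdf_mul_id (m : ℝ) {v : NNReal} (hv : v ≠ 0) :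
    ∫ x, gaussianPDFReal m v x * x = m := by
  have key : ∫ x, gaussianPDFReal m v x * x = ∫ x, gaussianPDFReal 0 v x * (x + m) := by
    rw [← integral_add_right_eq_self (fun x => gaussianPDFReal m v x * x) m]
    congr 1; funext x
    rw [gaussianPDFReal_add, sub_self]
  rw [key]
  have h1 : Integrable (fun x : ℝ => gaussianPDFReal 0 v x * x) := by
    simpa using integrable_pdf_mul_id (0:ℝ) hv
  have h2 := (integrable_gaussianPDFReal 0 v).mul_const m
  have hsplit : ∫ x, gaussianPDFReal 0 v x * (x + m)
      = (∫ x, gaussianPDFReal 0 v x * x) + ∫ x, gaussianPDFReal 0 v x * m := by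
    rw [← integral_add h1 h2]; congr 1; funext x; ring
  have hodd : ∫ x, gaussianPDFReal 0 v x * x = 0 := by
    have hneg := integral_neg_eq_self (fun x : ℝ => gaussianPDFReal 0 v x * x) volume
    simp only [even_pdf, mul_neg] at hneg
    rw [integral_neg] at hneg
    linarith
  rw [hsplit, hodd, integral_mul_const, integral_gaussianPDFReal_eq_one 0 hv]
  ring


lemma continuous_tanh : Continuous Real.tanh := by
  have : Real.tanh = fun x => Real.sinh x / Real.cosh x := funext Real.tanh_eq_sinh_div_cosh
  rw [this]
  exact Real.continuous_sinh.div Real.continuous_cosh fun x => (Real.cosh_pos x).ne'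

lemma abs_tanh_le_one (x : ℝ) : |Real.tanh x| ≤ 1 := by
  rw [Real.tanh_eq_sinh_div_cosh, abs_div, abs_of_pos (Real.cosh_pos x), div_le_one (Real.cosh_pos x)]
  nlinarith [Real.cosh_sq x, abs_nonneg (Real.sinh x), sq_abs (Real.sinh x), Real.cosh_pos x]

lemma one_add_tanh_pos (x : ℝ) : 0 < 1 + Real.tanh x := by
  have hc := Real.cosh_pos x
  have h1 : (-1 : ℝ) < Real.sinh x / Real.cosh x := by
    rw [lt_div_iff₀ hc]
    nlinarith [Real.sinh_add_cosh x, Real.exp_pos x]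
  rw [Real.tanh_eq_sinh_div_cosh]; linarith

lemma tanh_identity (u : ℝ) :
    Real.tanh u * (1 + Real.exp (-(2 * u))) = 1 - Real.exp (-(2 * u)) := by
  have he : Real.exp u ≠ 0 := (Real.exp_pos u).ne'
  have h2 : Real.exp (-(2 * u)) = (Real.exp u)⁻¹ * (Real.exp u)⁻¹ := by
    rw [← Real.exp_neg, ← Real.exp_add]; ring_nf
  have hc : Real.exp u + (Real.exp u)⁻¹ ≠ 0 := by positivity
  rw [Real.tanh_eq_sinh_div_cosh, Real.sinh_eq, Real.cosh_eq, Real.exp_neg, h2]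
  field_simp

lemma cosh_le_exp_abs (x : ℝ) : Real.cosh x ≤ Real.exp |x| := by
  rw [Real.cosh_eq]
  have h1 : Real.exp x ≤ Real.exp |x| := Real.exp_le_exp.mpr (le_abs_self x)
  have h2 : Real.exp (-x) ≤ Real.exp |x| := Real.exp_le_exp.mpr (neg_le_abs x)
  linarith

lemma log_two_cosh_bound (x : ℝ) :
    Real.log (2 * Real.cosh x) ≤ Real.log 2 + |x| := by
  have h1 : 2 * Real.cosh x ≤ 2 * Real.exp |x| := by linarith [cosh_le_exp_abs x]
  calc Real.log (2 * Real.cosh x) ≤ Real.log (2 * Real.exp |x|) :=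
        Real.log_le_log (by positivity) h1
    _ = Real.log 2 + |x| := by rw [Real.log_mul two_ne_zero (Real.exp_pos _).ne', Real.log_exp]

lemma log_two_cosh_nonneg (x : ℝ) : 0 ≤ Real.log (2 * Real.cosh x) :=
  Real.log_nonneg (by nlinarith [Real.one_le_cosh x])

variable {h : ℝ}

lemma v_ne (hh : 0 < h) : h.toNNReal ≠ 0 := by
  simp [Real.toNNReal_eq_zero, not_le, hh]

lemma coe_v (hh : 0 < h) : ((h.toNNReal : NNReal) : ℝ) = h := Real.coe_toNNReal _ hh.le

lemma map_affine (hh : 0 < h) :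
    (gaussianReal 0 1).map (fun z => z * Real.sqrt h + h) = gaussianReal h h.toNNReal := by
  have h1 : (gaussianReal 0 1).map (· * Real.sqrt h) = gaussianReal 0 h.toNNReal := by
    rw [gaussianReal_map_mul_const]
    congr 1
    · ring
    · ext
      push_cast
      rw [mul_one, Real.sq_sqrt hh.le, Real.coe_toNNReal _ hh.le]
  have h2 : (fun z : ℝ => z * Real.sqrt h + h) = (· + h) ∘ (· * Real.sqrt h) := rfl
  rw [h2, ← Measure.map_map (measurable_add_const h) (measurable_mul_const _), h1,
    gaussianReal_map_add_const, zero_add]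

lemma map_neg' (m : ℝ) (v : NNReal) :
    (gaussianReal m v).map (fun x => -x) = gaussianReal (-m) v := by
  have h1 : (fun x : ℝ => -x) = ((-1 : ℝ) * ·) := by funext x; ring
  rw [h1, gaussianReal_map_const_mul]
  congr 1
  · ring
  · ext; push_cast; ring


lemma integrable_id_gaussian (m : ℝ) {v : NNReal} (hv : v ≠ 0) :
    Integrable (fun x => x) (gaussianReal m v) := by
  rw [integrable_gaussianReal_iff m hv]
  exact integrable_pdf_mul_id m hv

lemma integral_id_gaussian (m : ℝ) {v : NNReal} (hv : v ≠ 0) :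
    ∫ x, x ∂(gaussianReal m v) = m := by
  rw [integral_gaussianReal_eq m hv]
  exact integral_pdf_mul_id m hv

lemma integral_map_affine (hh : 0 < h) (f : ℝ → ℝ) (hf : Continuous f) :
    ∫ z, f (z * Real.sqrt h + h) ∂(gaussianReal 0 1)
      = ∫ u, f u ∂(gaussianReal h h.toNNReal) := by
  rw [← map_affine hh,
    integral_map (by fun_prop) hf.aestronglyMeasurable]

lemma integral_reflect (hh : 0 < h) (f : ℝ → ℝ) (hf : Continuous f) :
    ∫ u, f u ∂(gaussianReal (-h) h.toNNReal)
      = ∫ u, f (-u) ∂(gaussianReal h h.toNNReal) := by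
  rw [← map_neg' h h.toNNReal, integral_map (by fun_prop) hf.aestronglyMeasurable]

lemma pdf_ratio (hh : 0 < h) (u : ℝ) :
    gaussianPDFReal (-h) h.toNNReal u
      = gaussianPDFReal h h.toNNReal u * Real.exp (-(2 * u)) := by
  simp only [gaussianPDFReal_def, coe_v hh]
  have he : -(u - -h)^2/(2*h) = -(u-h)^2/(2*h) + (-(2*u)) := by field_simp; ring
  rw [he, Real.exp_add]
  ring

lemma integral_density (hh : 0 < h) (f : ℝ → ℝ) :
    ∫ u, f u ∂(gaussianReal (-h) h.toNNReal)
      = ∫ u, f u * Real.exp (-(2 * u)) ∂(gaussianReal h h.toNNReal) := by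
  rw [integral_gaussianReal_eq _ (v_ne hh), integral_gaussianReal_eq _ (v_ne hh)]
  congr 1; funext u; rw [pdf_ratio hh]; ring

lemma integrable_density_iff (hh : 0 < h) (f : ℝ → ℝ) :
    Integrable f (gaussianReal (-h) h.toNNReal)
      ↔ Integrable (fun u => f u * Real.exp (-(2 * u))) (gaussianReal h h.toNNReal) := by
  rw [integrable_gaussianReal_iff _ (v_ne hh), integrable_gaussianReal_iff _ (v_ne hh)]
  constructor <;> intro hI <;> refine hI.congr (.of_forall fun u => ?_) <;>
    simp only [pdf_ratio hh] <;> ring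

lemma integrable_tanh_gauss (m : ℝ) {v : NNReal} (hv : v ≠ 0) :
    Integrable (fun u => Real.tanh u) (gaussianReal m v) := by
  refine (integrable_const (1:ℝ)).mono
    (continuous_tanh.aestronglyMeasurable) (.of_forall fun u => ?_)
  simp [Real.norm_eq_abs, abs_tanh_le_one u]

lemma integrable_mul_tanh_gauss (m : ℝ) {v : NNReal} (hv : v ≠ 0) :
    Integrable (fun u => u * Real.tanh u) (gaussianReal m v) := by
  refine (integrable_id_gaussian m hv).mono
    ((continuous_id.mul continuous_tanh).aestronglyMeasurable) (.of_forall fun u => ?_)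
  rw [Real.norm_eq_abs, Real.norm_eq_abs, abs_mul]
  have := abs_tanh_le_one u
  nlinarith [abs_nonneg u, abs_nonneg (Real.tanh u)]


lemma integral_mul_tanh (hh : 0 < h) :
    ∫ u, u * Real.tanh u ∂(gaussianReal h h.toNNReal) = h := by
  set μh := gaussianReal h h.toNNReal with hμ
  have hcont : Continuous fun u : ℝ => u * Real.tanh u := continuous_id.mul continuous_tanh
  have e1 : ∫ u, (u * Real.tanh u) * Real.exp (-(2 * u)) ∂μh
      = ∫ u, u * Real.tanh u ∂μh := by
    rw [← integral_density hh, integral_reflect hh _ hcont]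
    congr 1; funext u
    rw [Real.tanh_neg]; ring
  have I1 : Integrable (fun u => u * Real.tanh u) μh := integrable_mul_tanh_gauss h (v_ne hh)
  have I2 : Integrable (fun u => (u * Real.tanh u) * Real.exp (-(2 * u))) μh := by
    rw [← integrable_density_iff hh]
    exact integrable_mul_tanh_gauss (-h) (v_ne hh)
  have I3 : Integrable (fun u => u * Real.exp (-(2 * u))) μh := by
    rw [← integrable_density_iff hh]
    exact integrable_id_gaussian (-h) (v_ne hh)
  have I4 : Integrable (fun u => u) μh := integrable_id_gaussian h (v_ne hh)
  have e2 : (∫ u, u * Real.tanh u ∂μh) + ∫ u, (u * Real.tanh u) * Real.exp (-(2 * u)) ∂μh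
      = (∫ u, u ∂μh) - ∫ u, u * Real.exp (-(2 * u)) ∂μh := by
    rw [← integral_add I1 I2, ← integral_sub I4 I3]
    congr 1; funext u
    have := tanh_identity u
    calc u * Real.tanh u + u * Real.tanh u * Real.exp (-(2 * u))
        = u * (Real.tanh u * (1 + Real.exp (-(2 * u)))) := by ring
      _ = u * (1 - Real.exp (-(2 * u))) := by rw [this]
      _ = u - u * Real.exp (-(2 * u)) := by ring
  have e3 : ∫ u, u * Real.exp (-(2 * u)) ∂μh = -h := by
    have hd : ∫ u, u ∂(gaussianReal (-h) h.toNNReal)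
        = ∫ u, u * Real.exp (-(2 * u)) ∂μh := integral_density hh (fun u => u)
    rw [← hd, integral_id_gaussian (-h) (v_ne hh)]
  rw [e1] at e2
  rw [e3, integral_id_gaussian h (v_ne hh)] at e2
  linarith

lemma key (hh : 0 < h) :
    ∫ z, Real.tanh (z * Real.sqrt h + h) * (z / (2 * Real.sqrt h) + 1) ∂(gaussianReal 0 1)
      = (1/2) * (1 + ∫ z, Real.tanh (z * Real.sqrt h + h) ∂(gaussianReal 0 1)) := by
  have hs : (0:ℝ) < Real.sqrt h := Real.sqrt_pos.mpr hh
  have hs2 : Real.sqrt h ^ 2 = h := Real.sq_sqrt hh.le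
  set μh := gaussianReal h h.toNNReal with hμ
  have hE : ∫ z, Real.tanh (z * Real.sqrt h + h) ∂(gaussianReal 0 1)
      = ∫ u, Real.tanh u ∂μh := integral_map_affine hh _ continuous_tanh
  have hcont : Continuous fun u : ℝ => Real.tanh u * ((u + h) / (2 * h)) := by
    exact continuous_tanh.mul (by continuity)
  have hL : ∫ z, Real.tanh (z * Real.sqrt h + h) * (z / (2 * Real.sqrt h) + 1) ∂(gaussianReal 0 1)
      = ∫ u, Real.tanh u * ((u + h) / (2 * h)) ∂μh := by
    rw [← integral_map_affine hh _ hcont]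
    congr 1; funext z
    congr 1
    have : (z * Real.sqrt h + h + h) / (2 * h) = z / (2 * Real.sqrt h) + 1 := by
      field_simp
      linear_combination z * hs2
    rw [this]
  have I1 : Integrable (fun u => u * Real.tanh u) μh := integrable_mul_tanh_gauss h (v_ne hh)
  have I2 : Integrable (fun u => h * Real.tanh u) μh :=
    (integrable_tanh_gauss h (v_ne hh)).const_mul h
  have hsplit : ∫ u, Real.tanh u * ((u + h) / (2 * h)) ∂μh
      = (1 / (2*h)) * ((∫ u, u * Real.tanh u ∂μh) + h * ∫ u, Real.tanh u ∂μh) := by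
    rw [← integral_const_mul, ← integral_add I1 I2, ← integral_const_mul]
    congr 1; funext u; ring
  rw [hL, hsplit, integral_mul_tanh hh, hE]
  field_simp

lemma deriv_aux (hh : 0 < h) :
    HasDerivAt psiNL
      (∫ z, Real.tanh (z * Real.sqrt h + h) * (z / (2 * Real.sqrt h) + 1)
        ∂(gaussianReal 0 1)) h := by
  have habs : Integrable (fun z : ℝ => |z|) (gaussianReal 0 1) :=
    (integrable_id_gaussian 0 one_ne_zero).abs
  have hsh : (0:ℝ) < Real.sqrt (h/2) := Real.sqrt_pos.mpr (by linarith)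
  have hmain := hasDerivAt_integral_of_dominated_loc_of_deriv_le
    (μ := gaussianReal 0 1) (x₀ := h)
    (F := fun t z => Real.log (2 * Real.cosh (z * Real.sqrt t + t)))
    (F' := fun t z => Real.tanh (z * Real.sqrt t + t) * (z / (2 * Real.sqrt t) + 1))
    (bound := fun z => |z| / (2 * Real.sqrt (h/2)) + 1)
    (Metric.ball_mem_nhds h (by linarith : (0:ℝ) < h/2))
    (Filter.Eventually.of_forall fun t => by
      exact (Continuous.log (by continuity) fun z =>
        (by positivity : (0:ℝ) < 2 * Real.cosh (z * Real.sqrt t + t)).ne').aestronglyMeasurable)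
    ?_ ?_ ?_ ?_ ?_
  · exact hmain.2
  · -- Integrable (F h)
    refine ((habs.const_mul (Real.sqrt h)).add (integrable_const (h + Real.log 2))).mono
      ((Continuous.log (by continuity) fun z =>
        (by positivity : (0:ℝ) < 2 * Real.cosh (z * Real.sqrt h + h)).ne').aestronglyMeasurable)
      (Filter.Eventually.of_forall fun z => ?_)
    have hb := log_two_cosh_bound (z * Real.sqrt h + h)
    have hnn := log_two_cosh_nonneg (z * Real.sqrt h + h)
    have htr : |z * Real.sqrt h + h| ≤ Real.sqrt h * |z| + h := by
      calc |z * Real.sqrt h + h| ≤ |z * Real.sqrt h| + |h| := abs_add_le _ _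
        _ = Real.sqrt h * |z| + h := by
            rw [abs_mul, abs_of_nonneg (Real.sqrt_nonneg h), abs_of_pos hh]; ring
    simp only [Pi.add_apply]
    rw [Real.norm_eq_abs, abs_of_nonneg hnn, Real.norm_eq_abs]
    have : Real.sqrt h * |z| + (h + Real.log 2) ≤ |Real.sqrt h * |z| + (h + Real.log 2)| :=
      le_abs_self _
    linarith
  · -- meas of F' h
    exact ((continuous_tanh.comp (by continuity)).mul (by continuity)).aestronglyMeasurable
  · -- bound
    refine Filter.Eventually.of_forall fun z => fun t ht => ?_
    have ht2 : h/2 < t := by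
      have := Metric.mem_ball.mp ht
      rw [Real.dist_eq, abs_sub_lt_iff] at this
      linarith [this.2]
    have hst : Real.sqrt (h/2) ≤ Real.sqrt t := Real.sqrt_le_sqrt (by linarith)
    have hstpos : (0:ℝ) < Real.sqrt t := lt_of_lt_of_le hsh hst
    rw [Real.norm_eq_abs, abs_mul]
    have h1 : |Real.tanh (z * Real.sqrt t + t)| ≤ 1 := abs_tanh_le_one _
    have h2 : |z / (2 * Real.sqrt t) + 1| ≤ |z| / (2 * Real.sqrt (h/2)) + 1 := by
      calc |z / (2 * Real.sqrt t) + 1| ≤ |z / (2 * Real.sqrt t)| + 1 := by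
            simpa using abs_add_le (z / (2 * Real.sqrt t)) 1
        _ = |z| / (2 * Real.sqrt t) + 1 := by
            rw [abs_div, abs_of_pos (by positivity : (0:ℝ) < 2 * Real.sqrt t)]
        _ ≤ |z| / (2 * Real.sqrt (h/2)) + 1 := by gcongr
    have hnn2 : (0:ℝ) ≤ |z| / (2 * Real.sqrt (h/2)) + 1 := by positivity
    nlinarith [abs_nonneg (Real.tanh (z * Real.sqrt t + t)),
      abs_nonneg (z / (2 * Real.sqrt t) + 1)]
  · -- bound integrable
    exact (habs.div_const _).add (integrable_const 1)
  · -- differentiability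
    refine Filter.Eventually.of_forall fun z => fun t ht => ?_
    have ht2 : h/2 < t := by
      have := Metric.mem_ball.mp ht
      rw [Real.dist_eq, abs_sub_lt_iff] at this
      linarith [this.2]
    have htpos : (0:ℝ) < t := by linarith
    have hinner : HasDerivAt (fun t => z * Real.sqrt t + t) (z / (2 * Real.sqrt t) + 1) t := by
      have hsq := (Real.hasDerivAt_sqrt htpos.ne').const_mul z
      have := hsq.add (hasDerivAt_id' t)
      simpa [mul_one_div, div_eq_mul_inv, Pi.add_def] using this
    have h1 := hinner.cosh
    have h2 := (h1.const_mul 2).log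
      (by positivity : (2:ℝ) * Real.cosh (z * Real.sqrt t + t) ≠ 0)
    refine h2.congr_deriv ?_
    rw [Real.tanh_eq_sinh_div_cosh]
    have hcp : Real.cosh (z * Real.sqrt t + t) ≠ 0 := (Real.cosh_pos _).ne'
    field_simp


end PsiNL

/-- For `h > 0`, `ψ'(h) = (1/2)(1 + E[tanh(z√h + h)]) > 0`. -/
theorem psiNL_hasDerivAt_and_pos (h : ℝ) (hh : 0 < h) :
    HasDerivAt psiNL
      ((1 / 2) * (1 + ∫ z, Real.tanh (z * Real.sqrt h + h) ∂(gaussianReal 0 1))) h ∧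
    0 < (1 / 2) * (1 + ∫ z, Real.tanh (z * Real.sqrt h + h) ∂(gaussianReal 0 1)) := by
  constructor
  · have := PsiNL.deriv_aux hh
    rwa [PsiNL.key hh] at this
  · have hInt : Integrable (fun z => 1 + Real.tanh (z * Real.sqrt h + h)) (gaussianReal 0 1) := by
      refine (integrable_const (2:ℝ)).mono
        ((continuous_const.add (PsiNL.continuous_tanh.comp (by continuity))).aestronglyMeasurable)
        (Filter.Eventually.of_forall fun z => ?_)
      rw [Real.norm_eq_abs, Real.norm_eq_abs]
      have := PsiNL.abs_tanh_le_one (z * Real.sqrt h + h)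
      rw [abs_of_pos (PsiNL.one_add_tanh_pos _)]
      rw [abs_of_pos (by norm_num : (0:ℝ) < 2)]
      have := abs_le.mp this
      linarith [this.2]
    have hpos : 0 < ∫ z, (1 + Real.tanh (z * Real.sqrt h + h)) ∂(gaussianReal 0 1) := by
      rw [integral_pos_iff_support_of_nonneg_ae
        (Filter.Eventually.of_forall fun z => (PsiNL.one_add_tanh_pos _).le) hInt]
      have : Function.support (fun z => 1 + Real.tanh (z * Real.sqrt h + h)) = Set.univ := by
        ext z; simp [Function.mem_support, (PsiNL.one_add_tanh_pos (z * Real.sqrt h + h)).ne']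
      rw [this]
      simp
    have hsplit : ∫ z, (1 + Real.tanh (z * Real.sqrt h + h)) ∂(gaussianReal 0 1)
        = 1 + ∫ z, Real.tanh (z * Real.sqrt h + h) ∂(gaussianReal 0 1) := by
      rw [integral_add (integrable_const 1) (by
        refine (integrable_const (1:ℝ)).mono
          ((PsiNL.continuous_tanh.comp (by continuity)).aestronglyMeasurable)
          (Filter.Eventually.of_forall fun z => ?_)
        simpa [Real.norm_eq_abs] using PsiNL.abs_tanh_le_one (z * Real.sqrt h + h))]
      simp
    rw [hsplit] at hpos
    linarith
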